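/- With A and B as above satisfying A B^p = B^q A (so ℓ divides q^(n+1) − p^(n+1)), the diagonal entries λ, λ^s, ..., λ^(s^n) of B are pairwise distinct if and only if ℓ does not divide q^k − p^k for any k with 1 ≤ k ≤ n. -/

import Mathlib

lemma zmodUnitOfGcd {ℓ : ℕ} {p : ℤ} (h : Int.gcd p ℓ = 1) : IsUnit ((p : ZMod ℓ)) := by
  obtain ⟨a, b, hab⟩ := Int.isCoprime_iff_gcd_eq_one.mpr h
  apply IsUnit.of_mul_eq_one ((a : ZMod ℓ))
  have := congrArg (Int.cast : ℤ → ZMod ℓ) hab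
  push_cast at this
  rw [ZMod.natCast_self] at this
  linear_combination this

theorem stmt11 (n : ℕ) (p q s : ℤ) (ℓ : ℕ) (hℓ : 0 < ℓ) (lam : ℂ)
    (hlam : IsPrimitiveRoot lam ℓ) (hpℓ : Int.gcd p ℓ = 1) (hqℓ : Int.gcd q ℓ = 1)
    (hpqs : p ≡ q * s [ZMOD ℓ]) (hdvd : (ℓ : ℤ) ∣ q ^ (n + 1) - p ^ (n + 1)) :
    (∀ i j : Fin (n + 1), lam ^ (s ^ (i : ℕ)) = lam ^ (s ^ (j : ℕ)) → i = j)
      ↔ ∀ k : ℕ, 1 ≤ k → k ≤ n → ¬ ((ℓ : ℤ) ∣ q ^ k - p ^ k) := by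
  have hne : lam ≠ 0 := hlam.ne_zero hℓ.ne'
  have key : ∀ a b : ℤ, lam ^ a = lam ^ b ↔ ((a : ZMod ℓ) = (b : ZMod ℓ)) := by
    intro a b
    rw [ZMod.intCast_eq_intCast_iff, Int.modEq_iff_dvd, ← hlam.zpow_eq_one_iff_dvd,
      zpow_sub₀ hne, div_eq_one_iff_eq (zpow_ne_zero _ hne), eq_comm]
  set P : ZMod ℓ := ((p : ℤ) : ZMod ℓ) with hPdef
  set Q : ZMod ℓ := ((q : ℤ) : ZMod ℓ) with hQdef
  set S : ZMod ℓ := ((s : ℤ) : ZMod ℓ) with hSdef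
  have hPQS : P = Q * S := by
    have := (ZMod.intCast_eq_intCast_iff _ _ _).mpr hpqs
    push_cast at this
    exact this
  have hQu : IsUnit Q := zmodUnitOfGcd hqℓ
  have hPu : IsUnit P := zmodUnitOfGcd hpℓ
  have hSu : IsUnit S := isUnit_of_mul_isUnit_right (hPQS ▸ hPu)
  have dvd_iff : ∀ k : ℕ, (ℓ : ℤ) ∣ q ^ k - p ^ k ↔ S ^ k = 1 := by
    intro k
    rw [← ZMod.intCast_zmod_eq_zero_iff_dvd]
    push_cast
    rw [sub_eq_zero, ← hQdef, ← hPdef]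
    constructor
    · intro h
      have h2 : Q ^ k * S ^ k = Q ^ k * 1 := by
        rw [mul_one, ← mul_pow, ← hPQS, ← h]
      exact (hQu.pow k).mul_left_cancel h2
    · intro h
      rw [hPQS, mul_pow, h, mul_one]
  constructor
  · intro hinj k hk1 hkn hdvdk
    have hSk : S ^ k = 1 := (dvd_iff k).mp hdvdk
    have heq : lam ^ (s ^ k) = lam ^ (s ^ (0 : ℕ)) := by
      rw [key]
      push_cast
      rw [← hSdef, hSk, pow_zero]
    have := hinj ⟨k, by omega⟩ ⟨0, by omega⟩ (by simpa using heq)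
    simp only [Fin.mk.injEq] at this
    omega
  · intro h i j heq
    have hS : S ^ (i : ℕ) = S ^ (j : ℕ) := by
      have := (key _ _).mp heq
      push_cast at this
      rw [← hSdef] at this
      exact this
    have main : ∀ a b : ℕ, a ≤ n → b ≤ a → S ^ a = S ^ b → a = b := by
      intro a b han hba hab
      by_contra hne'
      have h1 : S ^ (a - b) * S ^ b = 1 * S ^ b := by
        rw [one_mul, ← pow_add]
        rw [Nat.sub_add_cancel hba, hab]
      have h2 : S ^ (a - b) = 1 := (hSu.pow b).mul_right_cancel h1
      exact h (a - b) (by omega) (by omega) ((dvd_iff _).mpr h2)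
    rcases le_total (j : ℕ) (i : ℕ) with hle | hle
    · exact Fin.ext (main _ _ (by omega) hle hS)
    · exact (Fin.ext (main _ _ (by omega) hle hS.symm)).symm
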